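/- Suppose φ₁ : ℝ → ℝ satisfies t - φ₁(t) = (1 + o(1))·(1-c)·t/ln t as t → ∞, for a constant c with 0 < c < 1. Then for every fixed n ∈ ℕ, the iterates satisfy t - φ₁^(n+1)(t) ~ (1-c)(n+1)·t/ln t as t → ∞, where φ₁^(n+1) denotes the (n+1)-st iterate. -/

import Mathlib

open Filter

/-- if `t - φ₁ t ~ (1-c) t / ln t`, then the `(n+1)`-st iterate
satisfies `t - φ₁^[n+1] t ~ (1-c)(n+1) t / ln t`. -/
theorem iterate_asymptotic
    (φ₁ : ℝ → ℝ) (c : ℝ) (hc : 0 < c) (hc1 : c < 1) (n : ℕ)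
    (hincr : ∀ᶠ t in atTop, ∀ s, t ≤ s → φ₁ t ≤ φ₁ s)
    (hlt : ∀ᶠ t in atTop, φ₁ t < t)
    (hiter : ∀ k : ℕ, Tendsto (fun t => φ₁^[k] t) atTop atTop)
    (hasymp : Tendsto (fun t => (t - φ₁ t) / ((1 - c) * t / Real.log t))
      atTop (nhds 1)) :
    Tendsto (fun t => (t - φ₁^[n + 1] t) / ((1 - c) * (n + 1) * t / Real.log t))
      atTop (nhds 1) := by
  have hc1' : (1 : ℝ) - c ≠ 0 := by linarith
  have hlog : Tendsto Real.log atTop atTop := Real.tendsto_log_atTop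
  -- key lemma: ratio to `t / log t` tends to `(1-c)*k`
  have key : ∀ k : ℕ, Tendsto (fun t => (t - φ₁^[k] t) / (t / Real.log t))
      atTop (nhds ((1 - c) * k)) := by
    intro k
    induction k with
    | zero =>
      simpa using (tendsto_const_nhds : Tendsto (fun _ : ℝ => (0:ℝ)) atTop (nhds 0))
    | succ k ih =>
      set ψ : ℝ → ℝ := fun t => φ₁^[k] t with hψdef
      have hψ : Tendsto ψ atTop atTop := hiter k
      have hbig : ∀ᶠ t in atTop, 1 < t ∧ 1 < ψ t :=
        (eventually_gt_atTop 1).and (hψ.eventually (eventually_gt_atTop 1))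
      -- (t - ψ t)/t → 0
      have h0 : Tendsto (fun t => (t - ψ t) / t) atTop (nhds 0) := by
        refine (ih.div_atTop hlog).congr' ?_
        filter_upwards [hbig] with t ht
        have ht0 : t ≠ 0 := by linarith [ht.1]
        have hL : Real.log t ≠ 0 := ne_of_gt (Real.log_pos ht.1)
        field_simp
        ring
      -- ψ t / t → 1
      have hratio : Tendsto (fun t => ψ t / t) atTop (nhds 1) := by
        have h1 : Tendsto (fun t => 1 - (t - ψ t) / t) atTop (nhds (1 - 0)) :=
          tendsto_const_nhds.sub h0
        rw [sub_zero] at h1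
        refine h1.congr' ?_
        filter_upwards [hbig] with t ht
        have ht0 : t ≠ 0 := by linarith [ht.1]
        field_simp
        ring
      -- log (ψ t) / log t → 1
      have hlogratio : Tendsto (fun t => Real.log (ψ t) / Real.log t) atTop (nhds 1) := by
        have hdiv0 : Tendsto (fun t => Real.log (ψ t / t)) atTop (nhds 0) := by
          have := ((Real.continuousAt_log one_ne_zero).tendsto).comp hratio
          simpa [Function.comp_def] using this
        have h2 : Tendsto (fun t => Real.log (ψ t / t) / Real.log t + 1) atTop (nhds (0 + 1)) :=
          (hdiv0.div_atTop hlog).add tendsto_const_nhds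
        rw [zero_add] at h2
        refine h2.congr' ?_
        filter_upwards [hbig] with t ht
        have ht0 : (0:ℝ) < t := by linarith [ht.1]
        have hψ0 : (0:ℝ) < ψ t := by linarith [ht.2]
        have hL : Real.log t ≠ 0 := ne_of_gt (Real.log_pos ht.1)
        rw [Real.log_div (ne_of_gt hψ0) (ne_of_gt ht0)]
        field_simp
        ring
      -- log t / log (ψ t) → 1
      have hlogratio' : Tendsto (fun t => Real.log t / Real.log (ψ t)) atTop (nhds 1) := by
        have := hlogratio.inv₀ one_ne_zero
        rw [inv_one] at this
        refine this.congr fun t => ?_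
        rw [inv_div]
      -- asymptotic along ψ
      have hasympψ : Tendsto
          (fun t => (ψ t - φ₁ (ψ t)) / ((1 - c) * ψ t / Real.log (ψ t)))
          atTop (nhds 1) := hasymp.comp hψ
      -- combine
      have hcomb : Tendsto (fun t =>
          (t - ψ t) / (t / Real.log t) +
          ((ψ t - φ₁ (ψ t)) / ((1 - c) * ψ t / Real.log (ψ t))) * (1 - c) *
            (ψ t / t) * (Real.log t / Real.log (ψ t)))
          atTop (nhds ((1 - c) * k + 1 * (1 - c) * 1 * 1)) :=
        ih.add (((hasympψ.mul tendsto_const_nhds).mul hratio).mul hlogratio')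
      have hval : (1 - c) * (k : ℝ) + 1 * (1 - c) * 1 * 1 = (1 - c) * ((k : ℕ) + 1 : ℕ) := by
        push_cast; ring
      rw [hval] at hcomb
      refine hcomb.congr' ?_
      filter_upwards [hbig] with t ht
      have ht0 : t ≠ 0 := ne_of_gt (by linarith [ht.1])
      have hψ0 : ψ t ≠ 0 := ne_of_gt (by linarith [ht.2])
      have hL : Real.log t ≠ 0 := ne_of_gt (Real.log_pos ht.1)
      have hLψ : Real.log (ψ t) ≠ 0 := ne_of_gt (Real.log_pos ht.2)
      rw [Function.iterate_succ_apply']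
      show _ = (t - φ₁ (ψ t)) / (t / Real.log t)
      field_simp
      ring
  -- conclude
  have hK : ((1 : ℝ) - c) * ((n : ℝ) + 1) ≠ 0 := by positivity
  have h := (key (n + 1)).div_const (((1 : ℝ) - c) * ((n : ℝ) + 1))
  have hval : ((1 - c) * ((n + 1 : ℕ) : ℝ)) / (((1 : ℝ) - c) * ((n : ℝ) + 1)) = 1 := by
    push_cast
    field_simp
  rw [hval] at h
  refine h.congr fun t => ?_
  rw [div_div_eq_mul_div, div_div_eq_mul_div, div_div]
  ring_nf
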